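/- arXiv:2211.05840 — 3 statements merged into one kernel-verified Lean document; each statement's English description precedes it below -/
import Mathlib

section
/- Let p₁ < p₂ be real numbers, P = [p₁, p₂], let L be a continuous linear operator on C(P, ℝ) satisfying Condition VII (there exists a constant K such that for every u ∈ C(P, ℝ) with u(p) > 0 for all p ∈ P, one has (L u)(p) − K·u(p) > 0 for all p ∈ P) and Condition VIII (there exists h ∈ C(P, ℝ) with L h = 0 and h(p) > 0 on P). Let D ∈ C(P, ℝ), d_min = min over p ∈ P of D(p), d_max = max over p ∈ P of D(p). Fix a point (x₀, t₀) with t₀ > 0 and let Δ₀ = {(x, t) : 0 ≤ t ≤ t₀ and x₀ − d_max·(t₀ − t) ≤ x ≤ x₀ − d_min·(t₀ − t)} be its characteristic triangle and Γ₀ = [x₀ − d_max·t₀, x₀ − d_min·t₀] × {0} its base on the axis t = 0. Let u : ℝ × [0, t₀] → C(P, ℝ) be continuously differentiable in (x, t) and f : ℝ × [0, t₀] × P → ℝ be continuous, satisfying the transport equation ∂ₜ u(x, t)(p) + D(p)·∂ₓ u(x, t)(p) = (L (u(x, t)))(p) + f(x, t, p) for all (x, t) ∈ Δ₀ and p ∈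 P, with initial values u(x, 0)(p) = u⁰(x, p). If f(x, t, p) > 0 for all (x, t) ∈ Δ₀ and all p ∈ P, and u⁰(x, p) > 0 for all (x, 0) ∈ Γ₀ and all p ∈ P, then u(x, t)(p) > 0 for all (x, t) ∈ Δ₀ and all p ∈ P. -/
open Set

/-- The characteristic triangle `Δ₀` of the point `(x₀, t₀)` for the transport
operator `∂ₜ + D(p) ∂ₓ`, bounded by the extreme characteristics with speeds
`dmin` and `dmax`. -/
def charTriangle (dmin dmax x₀ t₀ : ℝ) : Set (ℝ × ℝ) :=
  {q : ℝ × ℝ | 0 ≤ q.2 ∧ q.2 ≤ t₀ ∧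
    x₀ - dmax * (t₀ - q.2) ≤ q.1 ∧ q.1 ≤ x₀ - dmin * (t₀ - q.2)}

/-- The base `Γ₀` of the characteristic triangle on the axis `t = 0`
(the domain of influence of the initial data). -/
def charBase (dmin dmax x₀ t₀ : ℝ) : Set ℝ :=
  Icc (x₀ - dmax * t₀) (x₀ - dmin * t₀)

open Filter Topology in

/-- Chain rule along a line, for a function of two real variables having a partial
derivative in `t` at the base point and a continuous partial derivative in `x`. -/
lemma aux_line_deriv (v vt vx : ℝ → ℝ → ℝ) (T xs ts d : ℝ) (hts : ts ∈ Icc (0:ℝ) T)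
    (hvt : HasDerivWithinAt (fun s => v xs s) (vt xs ts) (Icc 0 T) ts)
    (hvx : ∀ (x : ℝ), ∀ t ∈ Icc (0:ℝ) T, HasDerivAt (fun y => v y t) (vx x t) x)
    (hvx_cont : ContinuousOn (fun q : ℝ × ℝ => vx q.1 q.2) (univ ×ˢ Icc 0 T)) :
    HasDerivWithinAt (fun s => v (xs + d * (s - ts)) s)
      (vt xs ts + d * vx xs ts) (Icc 0 T) ts := by
  rcases eq_or_ne d 0 with rfl | hd
  · simpa using hvt
  have key : ∀ s ∈ Icc (0:ℝ) T \ {ts}, ∃ c : ℝ,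
      |c - xs| ≤ |d| * |s - ts| ∧
      (v (xs + d * (s - ts)) s - v xs s) / (s - ts) = d * vx c s := by
    intro s hs
    have hsT : s ∈ Icc (0:ℝ) T := hs.1
    have hsne : s ≠ ts := hs.2
    have hst : s - ts ≠ 0 := sub_ne_zero.2 hsne
    set y := xs + d * (s - ts) with hy
    have hyx : y - xs = d * (s - ts) := by rw [hy]; ring
    have hyne : y ≠ xs := by
      intro hE
      exact (mul_ne_zero hd hst) (by rw [← hyx, hE, sub_self])
    have habs : |y - xs| = |d| * |s - ts| := by rw [hyx, abs_mul]
    rcases lt_or_gt_of_ne hyne with hlt | hgt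
    · obtain ⟨c, hc, hceq⟩ := exists_hasDerivAt_eq_slope (fun x => v x s) (fun x => vx x s)
        hlt (fun x _ => (hvx x s hsT).continuousAt.continuousWithinAt)
        (fun x _ => hvx x s hsT)
      refine ⟨c, ?_, ?_⟩
      · have h1 : |c - xs| = xs - c := by rw [abs_of_neg (by linarith [hc.2] : c - xs < 0)]; ring
        have h2 : |y - xs| = xs - y := by rw [abs_of_neg (by linarith : y - xs < 0)]; ring
        rw [h1, ← habs, h2]; linarith [hc.1]
      · rw [hceq]
        have hxy : xs - y ≠ 0 := sub_ne_zero.2 hyne.symm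
        field_simp
        linear_combination (v xs s - v y s) * hyx
    · obtain ⟨c, hc, hceq⟩ := exists_hasDerivAt_eq_slope (fun x => v x s) (fun x => vx x s)
        hgt (fun x _ => (hvx x s hsT).continuousAt.continuousWithinAt)
        (fun x _ => hvx x s hsT)
      refine ⟨c, ?_, ?_⟩
      · have h1 : |c - xs| = c - xs := abs_of_pos (by linarith [hc.1])
        have h2 : |y - xs| = y - xs := abs_of_pos (by linarith)
        rw [h1, ← habs, h2]; linarith [hc.2]
      · rw [hceq]
        have hxy : y - xs ≠ 0 := sub_ne_zero.2 hyne
        field_simp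
        linear_combination (v y s - v xs s) * hyx
  choose! ξ hξ1 hξ2 using key
  set l := 𝓝[Icc (0:ℝ) T \ {ts}] ts with hl
  have hmem : ∀ᶠ s in l, s ∈ Icc (0:ℝ) T \ {ts} := eventually_mem_nhdsWithin
  have hξtend : Tendsto ξ l (𝓝 xs) := by
    rw [tendsto_iff_dist_tendsto_zero]
    have hb : Tendsto (fun s : ℝ => |d| * |s - ts|) l (𝓝 0) := by
      have : Tendsto (fun s : ℝ => |d| * |s - ts|) (𝓝 ts) (𝓝 (|d| * |ts - ts|)) :=
        (continuous_const.mul ((continuous_id.sub continuous_const).abs)).tendsto ts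
      simpa using this.mono_left nhdsWithin_le_nhds
    exact squeeze_zero' (hmem.mono fun s _ => dist_nonneg)
      (hmem.mono fun s hs => by rw [Real.dist_eq]; exact hξ1 s hs) hb
  have hpair : Tendsto (fun s => ((ξ s, s) : ℝ × ℝ)) l (𝓝[univ ×ˢ Icc 0 T] (xs, ts)) := by
    rw [tendsto_nhdsWithin_iff]
    exact ⟨hξtend.prodMk_nhds (tendsto_id.mono_right nhdsWithin_le_nhds),
      hmem.mono fun s hs => ⟨trivial, hs.1⟩⟩
  have hvxtend : Tendsto (fun s => vx (ξ s) s) l (𝓝 (vx xs ts)) :=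
    Filter.Tendsto.comp (hvx_cont (xs, ts) ⟨trivial, hts⟩) hpair
  rw [hasDerivWithinAt_iff_tendsto_slope]
  have hslope2 : Tendsto (slope (fun s => v xs s) ts) l (𝓝 (vt xs ts)) := by
    have := hvt
    rw [hasDerivWithinAt_iff_tendsto_slope] at this
    exact this
  have hsum : Tendsto (fun s => d * vx (ξ s) s + slope (fun s' => v xs s') ts s) l
      (𝓝 (vt xs ts + d * vx xs ts)) := by
    have := (hvxtend.const_mul d).add hslope2
    rwa [add_comm] at this
  refine hsum.congr' (hmem.mono fun s hs => ?_)
  have hst : s - ts ≠ 0 := sub_ne_zero.2 hs.2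
  have h2 := hξ2 s hs
  rw [slope_def_field, slope_def_field]
  simp only [sub_self, mul_zero, add_zero]
  rw [← h2, ← add_div]
  ring_nf

open Filter Topology in
/-- **Lemma 2 (positivity principle).**  Let `L` satisfy Conditions VII and VIII.
If `u` is a continuously differentiable solution of
`uₜ + D(p) uₓ = L u + f` on the characteristic triangle `Δ₀` of `(x₀, t₀)`,
with initial values `u0 > 0` on the base `Γ₀` and forcing `f > 0` on `Δ₀`,
then `u > 0` on `Δ₀`. -/
theorem lemma2_positivity (p₁ p₂ : ℝ) (hp : p₁ < p₂)
    (L : C(Icc p₁ p₂, ℝ) →L[ℝ] C(Icc p₁ p₂, ℝ))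
    (K : ℝ)
    (hVII : ∀ u : C(Icc p₁ p₂, ℝ), (∀ p, 0 < u p) → ∀ p, 0 < L u p - K * u p)
    (h : C(Icc p₁ p₂, ℝ)) (hLh : L h = 0) (hh : ∀ p, 0 < h p)
    (D : C(Icc p₁ p₂, ℝ)) (dmin dmax : ℝ)
    (hdmin : IsLeast (range fun p => D p) dmin)
    (hdmax : IsGreatest (range fun p => D p) dmax)
    (x₀ t₀ : ℝ) (ht₀ : 0 < t₀)
    (u ut ux : ℝ → ℝ → C(Icc p₁ p₂, ℝ))
    (u0 : ℝ → Icc p₁ p₂ → ℝ)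
    (f : ℝ → ℝ → Icc p₁ p₂ → ℝ)
    -- `u` is continuously differentiable in `(x, t)` on `ℝ × [0, t₀]`,
    -- with partial derivatives `ut` (in `t`) and `ux` (in `x`)
    (hu_cont : ContinuousOn (fun q : ℝ × ℝ => u q.1 q.2) (univ ×ˢ Icc 0 t₀))
    (hut : ∀ x : ℝ, ∀ t ∈ Icc (0:ℝ) t₀,
      HasDerivWithinAt (fun s => u x s) (ut x t) (Icc 0 t₀) t)
    (hux : ∀ x : ℝ, ∀ t ∈ Icc (0:ℝ) t₀, HasDerivAt (fun y => u y t) (ux x t) x)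
    (hut_cont : ContinuousOn (fun q : ℝ × ℝ => ut q.1 q.2) (univ ×ˢ Icc 0 t₀))
    (hux_cont : ContinuousOn (fun q : ℝ × ℝ => ux q.1 q.2) (univ ×ˢ Icc 0 t₀))
    -- `f` is continuous
    (hf_cont : ContinuousOn (fun q : ℝ × ℝ × Icc p₁ p₂ => f q.1 q.2.1 q.2.2)
      (univ ×ˢ Icc 0 t₀ ×ˢ univ))
    -- the transport equation holds on `Δ₀`
    (hpde : ∀ q ∈ charTriangle dmin dmax x₀ t₀, ∀ p,
      ut q.1 q.2 p + D p * ux q.1 q.2 p = L (u q.1 q.2) p + f q.1 q.2 p)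
    -- initial condition
    (hinit : ∀ x : ℝ, ∀ p, u x 0 p = u0 x p)
    -- positivity of the forcing on `Δ₀` and of the initial data on `Γ₀`
    (hfpos : ∀ q ∈ charTriangle dmin dmax x₀ t₀, ∀ p, 0 < f q.1 q.2 p)
    (hu0pos : ∀ x ∈ charBase dmin dmax x₀ t₀, ∀ p, 0 < u0 x p) :
    ∀ q ∈ charTriangle dmin dmax x₀ t₀, ∀ p, 0 < u q.1 q.2 p := by
  classical
  haveI : Nonempty (Icc p₁ p₂) := ⟨⟨p₁, le_refl p₁, le_of_lt hp⟩⟩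
  have hD1 : ∀ p : Icc p₁ p₂, dmin ≤ D p := fun p => hdmin.2 ⟨p, rfl⟩
  have hD2 : ∀ p : Icc p₁ p₂, D p ≤ dmax := fun p => hdmax.2 ⟨p, rfl⟩
  by_contra hcon
  push_neg at hcon
  obtain ⟨q0, hq0, pbad, hbad⟩ := hcon
  set Δ := charTriangle dmin dmax x₀ t₀ with hΔdef
  set S : Set ((ℝ × ℝ) × Icc p₁ p₂) :=
    {z | z.1 ∈ Δ ∧ u z.1.1 z.1.2 z.2 ≤ 0} with hSdef
  have hSne : S.Nonempty := ⟨(q0, pbad), hq0, hbad⟩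
  have hΔsub : ∀ q ∈ Δ, q ∈ (univ : Set ℝ) ×ˢ Icc (0:ℝ) t₀ :=
    fun q hq => ⟨trivial, hq.1, hq.2.1⟩
  have hΔclosed : IsClosed Δ := by
    have hEq : Δ = {q : ℝ × ℝ | 0 ≤ q.2} ∩ {q | q.2 ≤ t₀} ∩
        {q | x₀ - dmax * (t₀ - q.2) ≤ q.1} ∩ {q | q.1 ≤ x₀ - dmin * (t₀ - q.2)} := by
      ext q; simp [hΔdef, charTriangle, and_assoc]
    rw [hEq]
    exact (((isClosed_le continuous_const continuous_snd).inter
      (isClosed_le continuous_snd continuous_const)).inter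
      (isClosed_le (by fun_prop) continuous_fst)).inter
      (isClosed_le continuous_fst (by fun_prop))
  have hΔcomp : IsCompact Δ := by
    refine ((isCompact_Icc (a := x₀ - |dmax| * t₀ - |dmin| * t₀)
      (b := x₀ + |dmax| * t₀ + |dmin| * t₀)).prod
      (isCompact_Icc (a := (0:ℝ)) (b := t₀))).of_isClosed_subset hΔclosed ?_
    rintro ⟨x, t⟩ ⟨h0, h1, h2, h3⟩
    have habs1 : dmax * (t₀ - t) ≤ |dmax| * t₀ := by
      nlinarith [le_abs_self dmax, abs_nonneg dmax]
    have habs2 : -(|dmin| * t₀) ≤ dmin * (t₀ - t) := by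
      nlinarith [neg_abs_le dmin, abs_nonneg dmin]
    refine ⟨⟨?_, ?_⟩, h0, h1⟩
    · show x₀ - |dmax| * t₀ - |dmin| * t₀ ≤ x
      simp only at h2
      have : (0:ℝ) ≤ |dmin| * t₀ := by positivity
      linarith
    · show x ≤ x₀ + |dmax| * t₀ + |dmin| * t₀
      simp only at h3
      have : (0:ℝ) ≤ |dmax| * t₀ := by positivity
      linarith
  have hΦcont : ContinuousOn (fun z : (ℝ × ℝ) × Icc p₁ p₂ => u z.1.1 z.1.2 z.2)
      (Δ ×ˢ (univ : Set (Icc p₁ p₂))) := by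
    have h1 : ContinuousOn (fun z : (ℝ × ℝ) × Icc p₁ p₂ => u z.1.1 z.1.2)
        (Δ ×ˢ (univ : Set (Icc p₁ p₂))) := by
      apply hu_cont.comp continuous_fst.continuousOn
      intro z hz
      exact hΔsub z.1 hz.1
    exact continuous_eval.comp_continuousOn
      (h1.prodMk continuous_snd.continuousOn)
  have hCcomp : IsCompact (Δ ×ˢ (univ : Set (Icc p₁ p₂))) := hΔcomp.prod isCompact_univ
  have hScomp : IsCompact S := by
    have hT : IsClosed (((Δ ×ˢ (univ : Set (Icc p₁ p₂))).restrict
        (fun z : (ℝ × ℝ) × Icc p₁ p₂ => u z.1.1 z.1.2 z.2)) ⁻¹' Iic 0) :=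
      isClosed_Iic.preimage hΦcont.restrict
    have hEq : S = Subtype.val '' (((Δ ×ˢ (univ : Set (Icc p₁ p₂))).restrict
        (fun z : (ℝ × ℝ) × Icc p₁ p₂ => u z.1.1 z.1.2 z.2)) ⁻¹' Iic 0) := by
      ext z
      simp only [hSdef, mem_setOf_eq, mem_image, Set.restrict, mem_preimage, mem_Iic,
        Subtype.exists, exists_and_right, exists_eq_right]
      constructor
      · rintro ⟨h1, h2⟩; exact ⟨⟨h1, trivial⟩, h2⟩
      · rintro ⟨⟨h1, h1'⟩, h2⟩; exact ⟨h1, h2⟩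
    rw [hEq]
    haveI : CompactSpace (Δ ×ˢ (univ : Set (Icc p₁ p₂))) :=
      isCompact_iff_compactSpace.1 hCcomp
    exact (hT.isCompact).image continuous_subtype_val
  obtain ⟨z, hzS, hzmin⟩ := hScomp.exists_isMinOn hSne
    ((continuous_snd.comp continuous_fst).continuousOn :
      ContinuousOn (fun z : (ℝ × ℝ) × Icc p₁ p₂ => z.1.2) S)
  obtain ⟨⟨⟨xs, ts⟩, ps⟩, rfl⟩ : ∃ w : (ℝ × ℝ) × Icc p₁ p₂, w = z := ⟨z, rfl⟩
  rw [isMinOn_iff] at hzmin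
  have hzΔ : (xs, ts) ∈ Δ := hzS.1
  have hzu : u xs ts ps ≤ 0 := hzS.2
  have hts0 : 0 ≤ ts := hzΔ.1
  have htst₀ : ts ≤ t₀ := hzΔ.2.1
  have htsIcc : ts ∈ Icc (0:ℝ) t₀ := ⟨hts0, htst₀⟩
  have hpos_before : ∀ x t : ℝ, ∀ p : Icc p₁ p₂, (x, t) ∈ Δ → t < ts → 0 < u x t p := by
    intro x t p hmem hlt
    by_contra hle
    push_neg at hle
    have := hzmin ((x, t), p) ⟨hmem, hle⟩
    simp only [Function.comp_apply] at this
    linarith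
  have htspos : 0 < ts := by
    rcases lt_or_eq_of_le hts0 with hlt | heq
    · exact hlt
    · exfalso
      have hbase : xs ∈ charBase dmin dmax x₀ t₀ := by
        have h2 := hzΔ.2.2.1
        have h3 := hzΔ.2.2.2
        simp only [← heq, sub_zero] at h2 h3
        exact ⟨h2, h3⟩
      have hp0 := hu0pos xs hbase ps
      rw [← hinit xs ps] at hp0
      rw [← heq] at hzu
      linarith
  have hchar : ∀ p : Icc p₁ p₂, ∀ s ∈ Icc (0:ℝ) ts, (xs + D p * (s - ts), s) ∈ Δ := by
    intro p s hs
    obtain ⟨hA, hB, hC, hE⟩ := hzΔ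
    simp only at hC hE
    refine ⟨hs.1, le_trans hs.2 htst₀, ?_, ?_⟩
    · show x₀ - dmax * (t₀ - s) ≤ xs + D p * (s - ts)
      nlinarith [mul_nonneg (sub_nonneg.2 (hD2 p)) (sub_nonneg.2 hs.2)]
    · show xs + D p * (s - ts) ≤ x₀ - dmin * (t₀ - s)
      nlinarith [mul_nonneg (sub_nonneg.2 (hD1 p)) (sub_nonneg.2 hs.2)]
  haveI hNB : (𝓝[Ico (0:ℝ) ts] ts).NeBot := by
    rw [← mem_closure_iff_nhdsWithin_neBot, closure_Ico (ne_of_lt htspos)]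
    exact ⟨hts0, le_refl ts⟩
  have hlim : ∀ p : Icc p₁ p₂, Tendsto (fun s => u (xs + D p * (s - ts)) s p)
      (𝓝[Ico (0:ℝ) ts] ts) (𝓝 (u xs ts p)) := by
    intro p
    have hcurve : Continuous (fun s : ℝ => ((xs + D p * (s - ts), s) : ℝ × ℝ)) := by
      fun_prop
    have hcont2 : ContinuousOn (fun q : ℝ × ℝ => u q.1 q.2 p) (univ ×ˢ Icc 0 t₀) :=
      (continuous_eval_const p).comp_continuousOn hu_cont
    have hmm : Tendsto (fun s : ℝ => ((xs + D p * (s - ts), s) : ℝ × ℝ))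
        (𝓝[Ico (0:ℝ) ts] ts) (𝓝[univ ×ˢ Icc 0 t₀] (xs + D p * (ts - ts), ts)) := by
      rw [tendsto_nhdsWithin_iff]
      refine ⟨(hcurve.tendsto ts).mono_left nhdsWithin_le_nhds, ?_⟩
      exact eventually_mem_nhdsWithin.mono fun s hs => ⟨trivial, hs.1, hs.2.le.trans htst₀⟩
    have hres := Filter.Tendsto.comp
      (hcont2 (xs + D p * (ts - ts), ts) ⟨trivial, htsIcc⟩) hmm
    simpa [Function.comp_def] using hres
  have hnn : ∀ p : Icc p₁ p₂, 0 ≤ u xs ts p := by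
    intro p
    refine ge_of_tendsto (hlim p) (eventually_mem_nhdsWithin.mono fun s hs => ?_)
    exact (hpos_before _ s p (hchar p s ⟨hs.1, hs.2.le⟩) hs.2).le
  have huz : u xs ts ps = 0 := le_antisymm hzu (hnn ps)
  have hL0 : 0 ≤ L (u xs ts) ps := by
    have hε : ∀ ε : ℝ, 0 < ε → ε * (K * h ps) < L (u xs ts) ps := by
      intro ε hεpos
      have hvpos : ∀ p, 0 < (u xs ts + ε • h) p := by
        intro p
        have h1 := hnn p
        have h2 := hh p
        simp only [ContinuousMap.add_apply, ContinuousMap.smul_apply, smul_eq_mul]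
        nlinarith
      have hVII' := hVII _ hvpos ps
      rw [map_add, map_smul, hLh, smul_zero, add_zero] at hVII'
      simp only [ContinuousMap.add_apply, ContinuousMap.smul_apply, smul_eq_mul, huz] at hVII'
      linarith
    by_contra hneg
    push_neg at hneg
    rcases le_or_gt 0 (K * h ps) with hc | hc
    · have := hε 1 one_pos
      nlinarith
    · have hεp : 0 < L (u xs ts) ps / (2 * (K * h ps)) := by
        apply div_pos_of_neg_of_neg
        · linarith
        · linarith
      have hcontr := hε _ hεp
      have hne : K * h ps ≠ 0 := ne_of_lt hc
      have heq2 : L (u xs ts) ps / (2 * (K * h ps)) * (K * h ps) = L (u xs ts) ps / 2 := by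
        rw [div_mul_eq_mul_div, mul_comm 2, ← div_div, mul_div_assoc, div_self hne, mul_one]
      rw [heq2] at hcontr
      linarith
  have hgderiv : HasDerivWithinAt (fun s => u (xs + D ps * (s - ts)) s ps)
      (ut xs ts ps + D ps * ux xs ts ps) (Icc 0 t₀) ts := by
    refine aux_line_deriv (fun x t => u x t ps) (fun x t => ut x t ps)
      (fun x t => ux x t ps) t₀ xs ts (D ps) htsIcc ?_ ?_ ?_
    · exact (ContinuousMap.evalCLM ℝ ps).hasFDerivAt.comp_hasDerivWithinAt ts
        (hut xs ts htsIcc)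
    · intro x t ht
      exact (ContinuousMap.evalCLM ℝ ps).hasFDerivAt.comp_hasDerivAt x (hux x t ht)
    · exact (continuous_eval_const ps).comp_continuousOn hux_cont
  have hg0 : u (xs + D ps * (ts - ts)) ts ps = 0 := by
    rw [sub_self, mul_zero, add_zero, huz]
  have hgd_le : ut xs ts ps + D ps * ux xs ts ps ≤ 0 := by
    have hmono : HasDerivWithinAt (fun s => u (xs + D ps * (s - ts)) s ps)
        (ut xs ts ps + D ps * ux xs ts ps) (Icc 0 ts) ts :=
      hgderiv.mono (Icc_subset_Icc le_rfl htst₀)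
    rw [hasDerivWithinAt_iff_tendsto_slope, Icc_sdiff_right] at hmono
    refine le_of_tendsto hmono (eventually_mem_nhdsWithin.mono fun s hs => ?_)
    have hspos : 0 < u (xs + D ps * (s - ts)) s ps :=
      hpos_before _ s ps (hchar ps s ⟨hs.1, hs.2.le⟩) hs.2
    rw [slope_def_field, hg0]
    apply div_nonpos_of_nonneg_of_nonpos
    · linarith
    · linarith [hs.2]
  have hpde' := hpde (xs, ts) hzΔ ps
  have hfp := hfpos (xs, ts) hzΔ ps
  simp only at hpde' hfp
  rw [hpde'] at hgd_le
  linarith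
end

section
/- Let p₁ < p₂ be real numbers, P = [p₁, p₂], let L be a continuous linear operator on C(P, ℝ) satisfying Condition VII (there exists a constant K such that for every u ∈ C(P, ℝ) with u(p) > 0 for all p ∈ P, one has (L u)(p) − K·u(p) > 0 for all p ∈ P) and Condition VIII (there exists h ∈ C(P, ℝ) with L h = 0 and h(p) > 0 on P). Let D ∈ C(P, ℝ) and T > 0. For i = 1, 2 let uᵢ : ℝ × [0, T] → C(P, ℝ) be continuously differentiable in (x, t) and fᵢ : ℝ × [0, T] × P → ℝ be continuous, satisfying ∂ₜ uᵢ(x, t)(p) + D(p)·∂ₓ uᵢ(x, t)(p) = (L (uᵢ(x, t)))(p) + fᵢ(x, t, p) for all x ∈ ℝ, t ∈ [0, T], p ∈ P, with initial values uᵢ(x, 0)(p) = uᵢ⁰(x, p). If u₁⁰(x, p) > |u₂⁰(x, p)| for all x ∈ ℝ, p ∈ P, and f₁(x, t, p) > |f₂(x, t, p)| for all x ∈ ℝ, t ∈ [0, T], p ∈ P, then u₁(x, t)(p) > |u₂(x, t)(p)| for all x ∈ ℝ, t ∈ [0, T], p ∈ P. -/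
open Set Filter Topology

set_option maxHeartbeats 1000000

lemma positivity_lemma (p₁ p₂ : ℝ)
    (L : C(Icc p₁ p₂, ℝ) →L[ℝ] C(Icc p₁ p₂, ℝ)) (K : ℝ)
    (hVII : ∀ u : C(Icc p₁ p₂, ℝ), (∀ p, 0 < u p) → ∀ p, 0 < L u p - K * u p)
    (h : C(Icc p₁ p₂, ℝ)) (hLh : L h = 0) (hh : ∀ p, 0 < h p)
    (D : C(Icc p₁ p₂, ℝ)) (T : ℝ)
    (w wt wx : ℝ → ℝ → C(Icc p₁ p₂, ℝ))
    (g : ℝ → ℝ → Icc p₁ p₂ → ℝ)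
    (hw_cont : ContinuousOn (fun q : ℝ × ℝ => w q.1 q.2) (univ ×ˢ Icc 0 T))
    (hwt : ∀ x : ℝ, ∀ t ∈ Icc (0:ℝ) T,
      HasDerivWithinAt (fun s => w x s) (wt x t) (Icc 0 T) t)
    (hwx : ∀ x : ℝ, ∀ t ∈ Icc (0:ℝ) T, HasDerivAt (fun y => w y t) (wx x t) x)
    (hwt_cont : ContinuousOn (fun q : ℝ × ℝ => wt q.1 q.2) (univ ×ˢ Icc 0 T))
    (hwx_cont : ContinuousOn (fun q : ℝ × ℝ => wx q.1 q.2) (univ ×ˢ Icc 0 T))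
    (hpde : ∀ x : ℝ, ∀ t ∈ Icc (0:ℝ) T, ∀ p,
      wt x t p + D p * wx x t p = L (w x t) p + g x t p)
    (hg_pos : ∀ x : ℝ, ∀ t ∈ Icc (0:ℝ) T, ∀ p, 0 < g x t p)
    (hinit : ∀ x : ℝ, ∀ p, 0 < w x 0 p) :
    ∀ x : ℝ, ∀ t ∈ Icc (0:ℝ) T, ∀ p, 0 < w x t p := by
  intro x₀ t₀ ht₀ p₀
  by_contra hcon
  push_neg at hcon
  have ht₀0 : (0:ℝ) ≤ t₀ := ht₀.1
  have ht₀T : t₀ ≤ T := ht₀.2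
  set M : ℝ := ‖D‖ with hMdef
  have hM0 : 0 ≤ M := norm_nonneg _
  have hD : ∀ p, |D p| ≤ M := by
    intro p
    simpa using D.norm_coe_le_norm p
  set Q : Set (ℝ × ℝ) := {q | q.2 ∈ Icc 0 t₀ ∧ |q.1 - x₀| ≤ M * (t₀ - q.2)} with hQdef
  -- Q is compact
  have hQclosed : IsClosed Q := by
    have h1 : IsClosed {q : ℝ × ℝ | q.2 ∈ Icc 0 t₀} := isClosed_Icc.preimage continuous_snd
    have h2 : IsClosed {q : ℝ × ℝ | |q.1 - x₀| ≤ M * (t₀ - q.2)} :=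
      isClosed_le ((continuous_fst.sub continuous_const).abs)
        (continuous_const.mul (continuous_const.sub continuous_snd))
    rw [hQdef, setOf_and]
    exact h1.inter h2
  have hQsub : Q ⊆ Icc (x₀ - M * t₀) (x₀ + M * t₀) ×ˢ Icc 0 t₀ := by
    rintro ⟨x, t⟩ ⟨ht, hx⟩
    have h1 : |x - x₀| ≤ M * t₀ := by
      refine hx.trans ?_
      nlinarith [ht.1, ht.2]
    rw [abs_le] at h1
    exact ⟨⟨by linarith [h1.1], by linarith [h1.2]⟩, ht⟩
  have hQcomp : IsCompact Q :=
    ((isCompact_Icc.prod isCompact_Icc).of_isClosed_subset hQclosed hQsub)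
  -- the evaluation map is continuous on the relevant set
  have hF_cont : ContinuousOn (fun z : (ℝ × ℝ) × Icc p₁ p₂ => w z.1.1 z.1.2 z.2)
      ((univ ×ˢ Icc 0 T) ×ˢ (univ : Set (Icc p₁ p₂))) := by
    have h1 : ContinuousOn (fun z : (ℝ × ℝ) × Icc p₁ p₂ => (w z.1.1 z.1.2, z.2))
        ((univ ×ˢ Icc 0 T) ×ˢ (univ : Set (Icc p₁ p₂))) := by
      refine ContinuousOn.prodMk ?_ continuous_snd.continuousOn
      exact hw_cont.comp continuous_fst.continuousOn (fun z hz => hz.1)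
    exact continuous_eval.comp_continuousOn h1
  -- the "bad set"
  set S : Set ((ℝ × ℝ) × Icc p₁ p₂) :=
    (Q ×ˢ (univ : Set (Icc p₁ p₂))) ∩
      (((univ ×ˢ Icc 0 T) ×ˢ (univ : Set (Icc p₁ p₂))) ∩
        (fun z : (ℝ × ℝ) × Icc p₁ p₂ => w z.1.1 z.1.2 z.2) ⁻¹' Iic 0) with hSdef
  have hbig_closed : IsClosed (((univ ×ˢ Icc 0 T) ×ˢ (univ : Set (Icc p₁ p₂))) ∩
      (fun z : (ℝ × ℝ) × Icc p₁ p₂ => w z.1.1 z.1.2 z.2) ⁻¹' Iic 0) :=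
    hF_cont.preimage_isClosed_of_isClosed
      (((isClosed_univ.prod isClosed_Icc).prod isClosed_univ)) isClosed_Iic
  have hScomp : IsCompact S :=
    (hQcomp.prod isCompact_univ).inter_right hbig_closed
  have hQmem : ∀ x t, (x, t) ∈ Q → t ∈ Icc (0:ℝ) T := by
    rintro x t ⟨ht, -⟩
    exact ⟨ht.1, ht.2.trans ht₀T⟩
  have hSne : S.Nonempty := by
    refine ⟨((x₀, t₀), p₀), ⟨⟨⟨ht₀.1, le_refl t₀⟩, by simp [hM0]⟩, mem_univ _⟩,
      ⟨⟨⟨mem_univ _, ht₀⟩, mem_univ _⟩, hcon⟩⟩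
  obtain ⟨⟨⟨xb, τ⟩, pb⟩, hzS, hzmin⟩ :=
    hScomp.exists_isMinOn hSne ((continuous_snd.comp continuous_fst).continuousOn :
      ContinuousOn (fun z : (ℝ × ℝ) × Icc p₁ p₂ => z.1.2) S)
  have hQm : (xb, τ) ∈ Q := hzS.1.1
  have hwτ : w xb τ pb ≤ 0 := hzS.2.2
  have hτ0 : 0 ≤ τ := hQm.1.1
  have hτt₀ : τ ≤ t₀ := hQm.1.2
  have hτT : τ ≤ T := hτt₀.trans ht₀T
  have hτIcc : τ ∈ Icc (0:ℝ) T := ⟨hτ0, hτT⟩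
  have hxb : |xb - x₀| ≤ M * (t₀ - τ) := hQm.2
  have hmin' : ∀ z ∈ S, τ ≤ z.1.2 := fun z hz => hzmin hz
  -- before time τ, w is positive on Q
  have hbefore : ∀ x t, (x, t) ∈ Q → t < τ → ∀ p, 0 < w x t p := by
    intro x t hQx hlt p
    by_contra hle
    push_neg at hle
    have hmem : ((x, t), p) ∈ S :=
      ⟨⟨hQx, mem_univ _⟩, ⟨⟨⟨mem_univ _, hQmem x t hQx⟩, mem_univ _⟩, hle⟩⟩
    exact absurd (hmin' _ hmem) (not_le.mpr hlt)
  -- τ is positive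
  have hτpos : 0 < τ := by
    rcases hτ0.lt_or_eq with h' | h'
    · exact h'
    · exfalso
      rw [← h'] at hwτ
      exact absurd hwτ (not_le.mpr (hinit xb pb))
  -- the time-τ slice at xb is nonnegative
  have hslice : ∀ p, 0 ≤ w xb τ p := by
    intro p
    have hcont0 : ContinuousWithinAt (fun t => w xb t p) (Ico 0 τ) τ := by
      have := ((ContinuousMap.evalCLM ℝ p).hasFDerivAt.comp_hasDerivWithinAt τ
        (hwt xb τ hτIcc)).continuousWithinAt
      exact this.mono (fun t ht => ⟨ht.1, ht.2.le.trans hτT⟩)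
    have hne : (𝓝[Ico (0:ℝ) τ] τ).NeBot := by
      rw [← mem_closure_iff_nhdsWithin_neBot, closure_Ico (ne_of_lt hτpos)]
      exact ⟨hτ0, le_refl τ⟩
    refine ge_of_tendsto hcont0 ?_
    filter_upwards [self_mem_nhdsWithin] with t ht
    refine (hbefore xb t ⟨⟨ht.1, ht.2.le.trans hτt₀⟩, ?_⟩ ht.2 p).le
    nlinarith [ht.2.le]
  have hw0 : w xb τ pb = 0 := le_antisymm hwτ (hslice pb)
  -- L w is nonnegative at the touching point
  have hLw : 0 ≤ L (w xb τ) pb := by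
    have key : ∀ ε : ℝ, 0 < ε → K * (ε * h pb) < L (w xb τ) pb := by
      intro ε hε
      have hpos : ∀ p, 0 < (w xb τ + ε • h) p := by
        intro p
        have h1 := hslice p
        have h2 := hh p
        simp only [ContinuousMap.add_apply, ContinuousMap.smul_apply, smul_eq_mul]
        nlinarith
      have h3 := hVII _ hpos pb
      rw [map_add, map_smul, hLh, smul_zero, add_zero] at h3
      simp only [ContinuousMap.add_apply, ContinuousMap.smul_apply, smul_eq_mul, hw0,
        zero_add] at h3
      linarith
    have htend : Tendsto (fun ε : ℝ => K * (ε * h pb)) (𝓝[>] 0) (𝓝 0) := by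
      have : Tendsto (fun ε : ℝ => K * (ε * h pb)) (𝓝 0) (𝓝 (K * (0 * h pb))) := by
        exact (tendsto_id.mul_const (h pb)).const_mul K
      simpa using this.mono_left nhdsWithin_le_nhds
    refine le_of_tendsto htend ?_
    filter_upwards [self_mem_nhdsWithin] with ε hε
    exact (key ε hε).le
  -- the PDE at the touching point
  set c : ℝ := g xb τ pb with hcdef
  have hc : 0 < c := hg_pos xb τ hτIcc pb
  have hpt : c ≤ wt xb τ pb + D pb * wx xb τ pb := by
    rw [hpde xb τ hτIcc pb]
    linarith
  -- continuity of the partial derivatives, evaluated at pb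
  set A : ℝ × ℝ → ℝ := fun q => wt q.1 q.2 pb with hAdef
  set B : ℝ × ℝ → ℝ := fun q => wx q.1 q.2 pb with hBdef
  have hA_cont : ContinuousOn A (univ ×ˢ Icc 0 T) :=
    (continuous_eval_const pb).comp_continuousOn hwt_cont
  have hB_cont : ContinuousOn B (univ ×ˢ Icc 0 T) :=
    (continuous_eval_const pb).comp_continuousOn hwx_cont
  have hmemτ : ((xb, τ) : ℝ × ℝ) ∈ (univ : Set ℝ) ×ˢ Icc (0:ℝ) T := ⟨mem_univ _, hτIcc⟩
  have hAc : ContinuousWithinAt A (univ ×ˢ Icc 0 T) (xb, τ) := hA_cont _ hmemτ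
  have hBc : ContinuousWithinAt B (univ ×ˢ Icc 0 T) (xb, τ) := hB_cont _ hmemτ
  rw [Metric.continuousWithinAt_iff] at hAc hBc
  obtain ⟨δ₁, hδ₁pos, hδ₁⟩ := hAc (c / 4) (by linarith)
  have hden : (0:ℝ) < 4 * (|D pb| + 1) := by positivity
  obtain ⟨δ₂, hδ₂pos, hδ₂⟩ := hBc (c / (4 * (|D pb| + 1))) (by positivity)
  set δ : ℝ := min δ₁ δ₂ with hδdef
  have hδpos : 0 < δ := lt_min hδ₁pos hδ₂pos
  set s0 : ℝ := min (τ / 2) (δ / (2 * (M + 1))) with hs0def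
  have hs0pos : 0 < s0 := lt_min (by linarith) (by positivity)
  have hs0τ : s0 ≤ τ / 2 := min_le_left _ _
  have hs0δ : s0 * (M + 1) ≤ δ / 2 := by
    have h1 : s0 ≤ δ / (2 * (M + 1)) := min_le_right _ _
    have h2 : (0:ℝ) < 2 * (M + 1) := by linarith
    rw [le_div_iff₀ h2] at h1
    nlinarith
  have hτs0 : 0 < τ - s0 := by linarith
  have hτs0T : τ - s0 ≤ T := by linarith
  have hτs0Icc : τ - s0 ∈ Icc (0:ℝ) T := ⟨hτs0.le, hτs0T⟩
  -- mean value theorem in t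
  have hfc : ContinuousOn (fun t => w xb t pb) (Icc 0 T) := by
    intro t ht
    exact ((ContinuousMap.evalCLM ℝ pb).hasFDerivAt.comp_hasDerivWithinAt t
      (hwt xb t ht)).continuousWithinAt
  obtain ⟨η, hη, hηeq⟩ := exists_hasDerivAt_eq_slope (fun t => w xb t pb)
    (fun t => A (xb, t)) (by linarith : τ - s0 < τ)
    (hfc.mono (fun t ht => ⟨by linarith [ht.1], by linarith [ht.2]⟩))
    (by
      intro t ht
      have htIcc : t ∈ Icc (0:ℝ) T := ⟨by linarith [ht.1], by linarith [ht.2]⟩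
      have hd := (ContinuousMap.evalCLM ℝ pb).hasFDerivAt.comp_hasDerivWithinAt t
        (hwt xb t htIcc)
      exact hd.hasDerivAt (Icc_mem_nhds (by linarith [ht.1]) (by
        rcases lt_or_eq_of_le hτT with h' | h'
        · linarith [ht.2]
        · linarith [ht.2])))
  have hηIcc : η ∈ Icc (0:ℝ) T := ⟨by linarith [hη.1], by linarith [hη.2]⟩
  have hs0ne : s0 ≠ 0 := ne_of_gt hs0pos
  have hteq : w xb (τ - s0) pb = - (s0 * A (xb, η)) := by
    have h2 : A (xb, η) = (w xb τ pb - w xb (τ - s0) pb) / s0 := by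
      simpa [show τ - (τ - s0) = s0 by ring] using hηeq
    rw [hw0] at h2
    rw [eq_div_iff hs0ne] at h2
    linear_combination h2
  -- mean value theorem in x
  set d : ℝ := D pb * s0 with hddef
  have hdabs : |d| ≤ M * s0 := by
    rw [hddef, abs_mul, abs_of_pos hs0pos]
    exact mul_le_mul_of_nonneg_right (hD pb) hs0pos.le
  have hgx : ∀ y : ℝ, HasDerivAt (fun y' => w y' (τ - s0) pb) (B (y, τ - s0)) y := by
    intro y
    exact (ContinuousMap.evalCLM ℝ pb).hasFDerivAt.comp_hasDerivAt y (hwx y (τ - s0) hτs0Icc)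
  have hxMVT : ∃ ξ : ℝ, |ξ - xb| ≤ |d| ∧
      w (xb - d) (τ - s0) pb = w xb (τ - s0) pb - d * B (ξ, τ - s0) := by
    rcases lt_trichotomy d 0 with hd | hd | hd
    · obtain ⟨ξ, hξ, hξeq⟩ := exists_hasDerivAt_eq_slope (fun y' => w y' (τ - s0) pb)
        (fun y' => B (y', τ - s0)) (by linarith : xb < xb - d)
        (fun y _ => (hgx y).continuousAt.continuousWithinAt)
        (fun y _ => hgx y)
      refine ⟨ξ, ?_, ?_⟩
      · rw [abs_of_neg hd, abs_of_pos (by linarith [hξ.1] : 0 < ξ - xb)]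
        linarith [hξ.2]
      · have hdne : d ≠ 0 := ne_of_lt hd
        have h2 : B (ξ, τ - s0) = (w (xb - d) (τ - s0) pb - w xb (τ - s0) pb) / (-d) := by
          simpa [show xb - d - xb = -d by ring] using hξeq
        rw [eq_div_iff (neg_ne_zero.mpr hdne)] at h2
        linear_combination -h2
    · exact ⟨xb, by simp [hd], by simp [hd]⟩
    · obtain ⟨ξ, hξ, hξeq⟩ := exists_hasDerivAt_eq_slope (fun y' => w y' (τ - s0) pb)
        (fun y' => B (y', τ - s0)) (by linarith : xb - d < xb)
        (fun y _ => (hgx y).continuousAt.continuousWithinAt)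
        (fun y _ => hgx y)
      refine ⟨ξ, ?_, ?_⟩
      · rw [abs_of_pos hd, abs_of_neg (by linarith [hξ.2] : ξ - xb < 0)]
        linarith [hξ.1]
      · have hdne : d ≠ 0 := ne_of_gt hd
        have h2 : B (ξ, τ - s0) = (w xb (τ - s0) pb - w (xb - d) (τ - s0) pb) / d := by
          simpa [show xb - (xb - d) = d by ring] using hξeq
        rw [eq_div_iff hdne] at h2
        linear_combination h2
  obtain ⟨ξ, hξclose, hξeq⟩ := hxMVT
  -- distance bounds
  have hdistA : dist ((xb, η) : ℝ × ℝ) ((xb, τ) : ℝ × ℝ) < δ₁ := by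
    rw [Prod.dist_eq]
    have h1 : dist xb xb = 0 := by simp
    have h2 : dist η τ ≤ s0 := by
      rw [Real.dist_eq, abs_of_neg (by linarith [hη.2] : η - τ < 0)]
      linarith [hη.1]
    have hs0δ1 : s0 < δ₁ := by
      have : s0 * 1 ≤ s0 * (M + 1) := by nlinarith
      have hδδ1 : δ ≤ δ₁ := min_le_left _ _
      nlinarith
    rw [h1]
    refine max_lt hδ₁pos (by linarith [h2])
  have hdistB : dist ((ξ, τ - s0) : ℝ × ℝ) ((xb, τ) : ℝ × ℝ) < δ₂ := by
    rw [Prod.dist_eq]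
    have h1 : dist ξ xb ≤ M * s0 := by
      rw [Real.dist_eq]; exact hξclose.trans hdabs
    have h2 : dist (τ - s0) τ = s0 := by
      rw [Real.dist_eq, abs_of_neg (by linarith : τ - s0 - τ < 0)]
      ring
    have hbig : (M + 1) * s0 < δ₂ := by
      have hδδ2 : δ ≤ δ₂ := min_le_right _ _
      nlinarith
    refine max_lt (by nlinarith) (by rw [h2]; nlinarith)
  have hAbound : |A (xb, η) - A (xb, τ)| < c / 4 := by
    have := hδ₁ ⟨mem_univ _, hηIcc⟩ hdistA
    rwa [Real.dist_eq] at this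
  have hBbound : |B (ξ, τ - s0) - B (xb, τ)| < c / (4 * (|D pb| + 1)) := by
    have := hδ₂ ⟨mem_univ _, hτs0Icc⟩ hdistB
    rwa [Real.dist_eq] at this
  -- the key lower bound
  have hAτ : A (xb, τ) = wt xb τ pb := rfl
  have hBτ : B (xb, τ) = wx xb τ pb := rfl
  have hDB : |D pb * B (ξ, τ - s0) - D pb * B (xb, τ)| ≤ c / 4 := by
    rw [← mul_sub, abs_mul]
    have h1 : |D pb| * |B (ξ, τ - s0) - B (xb, τ)| ≤ |D pb| * (c / (4 * (|D pb| + 1))) :=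
      mul_le_mul_of_nonneg_left hBbound.le (abs_nonneg _)
    refine h1.trans ?_
    have heq : |D pb| * (c / (4 * (|D pb| + 1))) = (|D pb| * c) / (4 * (|D pb| + 1)) := by
      ring
    rw [heq, div_le_div_iff₀ hden (by norm_num : (0:ℝ) < 4)]
    nlinarith [abs_nonneg (D pb)]
  have hsum : c / 2 ≤ A (xb, η) + D pb * B (ξ, τ - s0) := by
    have h1 : A (xb, η) ≥ wt xb τ pb - c / 4 := by
      rw [← hAτ]; cases' abs_lt.mp hAbound with h1 h2; linarith
    have h2 : D pb * B (ξ, τ - s0) ≥ D pb * wx xb τ pb - c / 4 := by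
      rw [← hBτ]; cases' abs_le.mp hDB with h1 h2; linarith
    linarith
  -- contradiction: at ((xb - d, τ - s0), pb) the solution is negative but must be positive
  have hval : w (xb - d) (τ - s0) pb = - (s0 * (A (xb, η) + D pb * B (ξ, τ - s0))) := by
    rw [hξeq, hteq, hddef]; ring
  have hneg : w (xb - d) (τ - s0) pb < 0 := by
    rw [hval]
    have : 0 < s0 * (c / 2) := by positivity
    nlinarith [hsum]
  have hQmem2 : ((xb - d, τ - s0) : ℝ × ℝ) ∈ Q := by
    constructor
    · show τ - s0 ∈ Icc 0 t₀
      exact ⟨by linarith, by linarith⟩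
    · show |xb - d - x₀| ≤ M * (t₀ - (τ - s0))
      have h1 : |xb - d - x₀| ≤ |xb - x₀| + |d| := by
        have : xb - d - x₀ = (xb - x₀) + (-d) := by ring
        rw [this]
        exact (abs_add_le _ _).trans (by rw [abs_neg])
      nlinarith [hxb, hdabs]
  exact absurd hneg (not_lt.mpr (hbefore _ _ hQmem2 (by linarith) pb).le)


/-- **Lemma 3 (lemma on barriers).**  Let `L` satisfy Conditions VII and VIII.
If `u₁, u₂` solve `uᵢₜ + D(p) uᵢₓ = L uᵢ + fᵢ` on `ℝ × [0, T]` with initial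
data `uᵢ⁰`, and `u₁⁰ > |u₂⁰|`, `f₁ > |f₂|` everywhere, then `u₁ > |u₂|`
everywhere on `ℝ × [0, T]`. -/
theorem lemma3_barriers (p₁ p₂ : ℝ) (hp : p₁ < p₂)
    (L : C(Icc p₁ p₂, ℝ) →L[ℝ] C(Icc p₁ p₂, ℝ))
    (K : ℝ)
    (hVII : ∀ u : C(Icc p₁ p₂, ℝ), (∀ p, 0 < u p) → ∀ p, 0 < L u p - K * u p)
    (h : C(Icc p₁ p₂, ℝ)) (hLh : L h = 0) (hh : ∀ p, 0 < h p)
    (D : C(Icc p₁ p₂, ℝ)) (T : ℝ) (hT : 0 < T)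
    (u₁ u₁t u₁x u₂ u₂t u₂x : ℝ → ℝ → C(Icc p₁ p₂, ℝ))
    (u₁0 u₂0 : ℝ → Icc p₁ p₂ → ℝ)
    (f₁ f₂ : ℝ → ℝ → Icc p₁ p₂ → ℝ)
    -- `u₁` is continuously differentiable in `(x, t)` on `ℝ × [0, T]`
    (hu₁_cont : ContinuousOn (fun q : ℝ × ℝ => u₁ q.1 q.2) (univ ×ˢ Icc 0 T))
    (hu₁t : ∀ x : ℝ, ∀ t ∈ Icc (0:ℝ) T,
      HasDerivWithinAt (fun s => u₁ x s) (u₁t x t) (Icc 0 T) t)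
    (hu₁x : ∀ x : ℝ, ∀ t ∈ Icc (0:ℝ) T, HasDerivAt (fun y => u₁ y t) (u₁x x t) x)
    (hu₁t_cont : ContinuousOn (fun q : ℝ × ℝ => u₁t q.1 q.2) (univ ×ˢ Icc 0 T))
    (hu₁x_cont : ContinuousOn (fun q : ℝ × ℝ => u₁x q.1 q.2) (univ ×ˢ Icc 0 T))
    -- `u₂` is continuously differentiable in `(x, t)` on `ℝ × [0, T]`
    (hu₂_cont : ContinuousOn (fun q : ℝ × ℝ => u₂ q.1 q.2) (univ ×ˢ Icc 0 T))
    (hu₂t : ∀ x : ℝ, ∀ t ∈ Icc (0:ℝ) T,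
      HasDerivWithinAt (fun s => u₂ x s) (u₂t x t) (Icc 0 T) t)
    (hu₂x : ∀ x : ℝ, ∀ t ∈ Icc (0:ℝ) T, HasDerivAt (fun y => u₂ y t) (u₂x x t) x)
    (hu₂t_cont : ContinuousOn (fun q : ℝ × ℝ => u₂t q.1 q.2) (univ ×ˢ Icc 0 T))
    (hu₂x_cont : ContinuousOn (fun q : ℝ × ℝ => u₂x q.1 q.2) (univ ×ˢ Icc 0 T))
    -- `f₁`, `f₂` are continuous
    (hf₁_cont : ContinuousOn (fun q : ℝ × ℝ × Icc p₁ p₂ => f₁ q.1 q.2.1 q.2.2)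
      (univ ×ˢ Icc 0 T ×ˢ univ))
    (hf₂_cont : ContinuousOn (fun q : ℝ × ℝ × Icc p₁ p₂ => f₂ q.1 q.2.1 q.2.2)
      (univ ×ˢ Icc 0 T ×ˢ univ))
    -- the transport equations
    (hpde₁ : ∀ x : ℝ, ∀ t ∈ Icc (0:ℝ) T, ∀ p,
      u₁t x t p + D p * u₁x x t p = L (u₁ x t) p + f₁ x t p)
    (hpde₂ : ∀ x : ℝ, ∀ t ∈ Icc (0:ℝ) T, ∀ p,
      u₂t x t p + D p * u₂x x t p = L (u₂ x t) p + f₂ x t p)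
    -- initial conditions
    (hinit₁ : ∀ x : ℝ, ∀ p, u₁ x 0 p = u₁0 x p)
    (hinit₂ : ∀ x : ℝ, ∀ p, u₂ x 0 p = u₂0 x p)
    -- barrier hypotheses
    (hbar0 : ∀ x : ℝ, ∀ p, |u₂0 x p| < u₁0 x p)
    (hbarf : ∀ x : ℝ, ∀ t ∈ Icc (0:ℝ) T, ∀ p, |f₂ x t p| < f₁ x t p) :
    ∀ x : ℝ, ∀ t ∈ Icc (0:ℝ) T, ∀ p, |u₂ x t p| < u₁ x t p := by
  have hpos₁ : ∀ x : ℝ, ∀ t ∈ Icc (0:ℝ) T, ∀ p, 0 < (u₁ x t - u₂ x t) p := by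
    refine positivity_lemma p₁ p₂ L K hVII h hLh hh D T
      (fun x t => u₁ x t - u₂ x t) (fun x t => u₁t x t - u₂t x t)
      (fun x t => u₁x x t - u₂x x t) (fun x t p => f₁ x t p - f₂ x t p)
      (hu₁_cont.sub hu₂_cont)
      (fun x t ht => (hu₁t x t ht).sub (hu₂t x t ht))
      (fun x t ht => (hu₁x x t ht).sub (hu₂x x t ht))
      (hu₁t_cont.sub hu₂t_cont) (hu₁x_cont.sub hu₂x_cont) ?_ ?_ ?_
    · intro x t ht p
      have h1 := hpde₁ x t ht p
      have h2 := hpde₂ x t ht p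
      simp only [ContinuousMap.sub_apply, map_sub]
      linarith
    · intro x t ht p
      show 0 < f₁ x t p - f₂ x t p
      have h1 := hbarf x t ht p
      have h2 := le_abs_self (f₂ x t p)
      linarith
    · intro x p
      simp only [ContinuousMap.sub_apply, hinit₁, hinit₂]
      have h1 := hbar0 x p
      have h2 := le_abs_self (u₂0 x p)
      linarith
  have hpos₂ : ∀ x : ℝ, ∀ t ∈ Icc (0:ℝ) T, ∀ p, 0 < (u₁ x t + u₂ x t) p := by
    refine positivity_lemma p₁ p₂ L K hVII h hLh hh D T
      (fun x t => u₁ x t + u₂ x t) (fun x t => u₁t x t + u₂t x t)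
      (fun x t => u₁x x t + u₂x x t) (fun x t p => f₁ x t p + f₂ x t p)
      (hu₁_cont.add hu₂_cont)
      (fun x t ht => (hu₁t x t ht).add (hu₂t x t ht))
      (fun x t ht => (hu₁x x t ht).add (hu₂x x t ht))
      (hu₁t_cont.add hu₂t_cont) (hu₁x_cont.add hu₂x_cont) ?_ ?_ ?_
    · intro x t ht p
      have h1 := hpde₁ x t ht p
      have h2 := hpde₂ x t ht p
      simp only [ContinuousMap.add_apply, map_add]
      linarith
    · intro x t ht p
      show 0 < f₁ x t p + f₂ x t p
      have h1 := hbarf x t ht p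
      have h2 := neg_abs_le (f₂ x t p)
      linarith
    · intro x p
      simp only [ContinuousMap.add_apply, hinit₁, hinit₂]
      have h1 := hbar0 x p
      have h2 := neg_abs_le (u₂0 x p)
      linarith
  intro x t ht p
  have h1 := hpos₁ x t ht p
  have h2 := hpos₂ x t ht p
  simp only [ContinuousMap.sub_apply] at h1
  simp only [ContinuousMap.add_apply] at h2
  rw [abs_lt]
  constructor <;> linarith
end

section
/- Let p₁ < p₂ be real numbers, P = [p₁, p₂], let L be a continuous linear operator on C(P, ℝ) satisfying Condition VII (there exists a constant K such that for every u ∈ C(P, ℝ) with u(p) > 0 for all p ∈ P, one has (L u)(p) − K·u(p) > 0 for all p ∈ P) and Condition VIII (there exists h ∈ C(P, ℝ) with L h = 0 and h(p) > 0 on P). Let D ∈ C(P, ℝ), d_min = min over p ∈ P of D(p), d_max = max over p ∈ P of D(p). Then there exists a constant C > 0 such that for every point (x₀, t₀) with t₀ > 0, with characteristic triangle Δ₀ = {(x, t) : 0 ≤ t ≤ t₀ and x₀ − d_max·(t₀ − t) ≤ x ≤ x₀ − d_min·(t₀ − t)} and base Γ₀ = [x₀ − d_max·t₀, x₀ − d_min·t₀]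 × {0}, the following holds: if u : ℝ × [0, t₀] → C(P, ℝ) is continuously differentiable in (x, t), f : ℝ × [0, t₀] × P → ℝ is continuous, u satisfies ∂ₜ u(x, t)(p) + D(p)·∂ₓ u(x, t)(p) = (L (u(x, t)))(p) + f(x, t, p) on Δ₀ with u(x, 0)(p) = u⁰(x, p), then sup over (x, t) ∈ Δ₀ and p ∈ P of |u(x, t)(p)| ≤ C·( sup over (x, 0) ∈ Γ₀ and p ∈ P of |u⁰(x, p)| + t₀ · sup over (x, t) ∈ Δ₀ and p ∈ P of |f(x, t, p)| ). -/
open Set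

lemma charMem {dmin dmax x₀ t₀ X t c s : ℝ}
    (hq : (X, t) ∈ charTriangle dmin dmax x₀ t₀)
    (hc1 : dmin ≤ c) (hc2 : c ≤ dmax) (hs0 : 0 ≤ s) (hst : s ≤ t) :
    (X - c * (t - s), s) ∈ charTriangle dmin dmax x₀ t₀ := by
  obtain ⟨h1, h2, h3, h4⟩ := hq
  simp only [charTriangle, mem_setOf_eq] at *
  refine ⟨hs0, le_trans hst h2, ?_, ?_⟩ <;>
    nlinarith [mul_le_mul_of_nonneg_right hc2 (sub_nonneg.2 hst),
      mul_le_mul_of_nonneg_right hc1 (sub_nonneg.2 hst)]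

lemma isClosed_charTriangle (dmin dmax x₀ t₀ : ℝ) :
    IsClosed (charTriangle dmin dmax x₀ t₀) := by
  have : charTriangle dmin dmax x₀ t₀ =
      {q : ℝ × ℝ | 0 ≤ q.2} ∩ ({q | q.2 ≤ t₀} ∩
        ({q | x₀ - dmax * (t₀ - q.2) ≤ q.1} ∩ {q | q.1 ≤ x₀ - dmin * (t₀ - q.2)})) := by
    ext q; simp [charTriangle, mem_setOf_eq, and_assoc]
  rw [this]
  exact (isClosed_le continuous_const continuous_snd).inter
    ((isClosed_le continuous_snd continuous_const).inter
      ((isClosed_le (by fun_prop) continuous_fst).inter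
        (isClosed_le continuous_fst (by fun_prop))))

lemma isCompact_charTriangle (dmin dmax x₀ t₀ : ℝ) :
    IsCompact (charTriangle dmin dmax x₀ t₀) := by
  refine IsCompact.of_isClosed_subset
    ((isCompact_Icc (a := min (x₀ - dmax * t₀) x₀) (b := max (x₀ - dmin * t₀) x₀)).prod
      (isCompact_Icc (a := (0:ℝ)) (b := t₀)))
    (isClosed_charTriangle dmin dmax x₀ t₀) ?_
  rintro ⟨x, t⟩ ⟨h1, h2, h3, h4⟩
  refine ⟨⟨?_, ?_⟩, h1, h2⟩
  · rcases le_or_gt 0 dmax with hd | hd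
    · have : dmax * (t₀ - t) ≤ dmax * t₀ := by nlinarith
      calc min (x₀ - dmax * t₀) x₀ ≤ x₀ - dmax * t₀ := min_le_left _ _
        _ ≤ x₀ - dmax * (t₀ - t) := by linarith
        _ ≤ x := h3
    · have : dmax * (t₀ - t) ≤ 0 := by nlinarith
      calc min (x₀ - dmax * t₀) x₀ ≤ x₀ := min_le_right _ _
        _ ≤ x₀ - dmax * (t₀ - t) := by linarith
        _ ≤ x := h3
  · rcases le_or_gt 0 dmin with hd | hd
    · have : 0 ≤ dmin * (t₀ - t) := by nlinarith
      calc x ≤ x₀ - dmin * (t₀ - t) := h4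
        _ ≤ x₀ := by linarith
        _ ≤ max (x₀ - dmin * t₀) x₀ := le_max_right _ _
    · have : dmin * t₀ ≤ dmin * (t₀ - t) := by nlinarith
      calc x ≤ x₀ - dmin * (t₀ - t) := h4
        _ ≤ x₀ - dmin * t₀ := by linarith
        _ ≤ max (x₀ - dmin * t₀) x₀ := le_max_left _ _

lemma mvtx (g g' : ℝ → ℝ) (hg : ∀ x, HasDerivAt g (g' x) x) (a b : ℝ) :
    ∃ ξ, |ξ - b| ≤ |a - b| ∧ g b - g a = g' ξ * (b - a) := by
  rcases lt_trichotomy a b with hab | rfl | hba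
  · obtain ⟨ξ, hξ, hslope⟩ := exists_hasDerivAt_eq_slope g g' hab
      (fun x _ => (hg x).continuousAt.continuousWithinAt) (fun x _ => hg x)
    rw [eq_div_iff (sub_ne_zero.2 hab.ne')] at hslope
    refine ⟨ξ, ?_, hslope.symm⟩
    rw [abs_of_nonpos (by linarith [hξ.2] : ξ - b ≤ 0),
      abs_of_nonpos (by linarith : a - b ≤ 0)]
    linarith [hξ.1]
  · exact ⟨a, by simp, by ring⟩
  · obtain ⟨ξ, hξ, hslope⟩ := exists_hasDerivAt_eq_slope g g' hba
      (fun x _ => (hg x).continuousAt.continuousWithinAt) (fun x _ => hg x)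
    rw [eq_div_iff (sub_ne_zero.2 hba.ne')] at hslope
    refine ⟨ξ, ?_, by linear_combination hslope⟩
    · rw [abs_of_nonneg (by linarith [hξ.1] : 0 ≤ ξ - b),
        abs_of_nonneg (by linarith : 0 ≤ a - b)]
      linarith [hξ.2]

set_option maxHeartbeats 1000000 in
lemma core (p₁ p₂ : ℝ) (hp : p₁ < p₂)
    (L : C(Icc p₁ p₂, ℝ) →L[ℝ] C(Icc p₁ p₂, ℝ)) (K : ℝ)
    (hVII : ∀ u : C(Icc p₁ p₂, ℝ), (∀ p, 0 < u p) → ∀ p, 0 < L u p - K * u p)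
    (h : C(Icc p₁ p₂, ℝ)) (hLh : L h = 0) (hh : ∀ p, 0 < h p)
    (D : C(Icc p₁ p₂, ℝ)) (dmin dmax : ℝ)
    (hdmin : IsLeast (range fun p => D p) dmin)
    (hdmax : IsGreatest (range fun p => D p) dmax)
    (x₀ t₀ : ℝ) (ht₀ : 0 < t₀)
    (u ut ux : ℝ → ℝ → C(Icc p₁ p₂, ℝ))
    (f : ℝ → ℝ → Icc p₁ p₂ → ℝ)
    (hu : ContinuousOn (fun q : ℝ × ℝ => u q.1 q.2) (univ ×ˢ Icc 0 t₀))
    (hut : ∀ x : ℝ, ∀ t ∈ Icc (0:ℝ) t₀,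
      HasDerivWithinAt (fun s => u x s) (ut x t) (Icc 0 t₀) t)
    (hux : ∀ x : ℝ, ∀ t ∈ Icc (0:ℝ) t₀, HasDerivAt (fun y => u y t) (ux x t) x)
    (hutc : ContinuousOn (fun q : ℝ × ℝ => ut q.1 q.2) (univ ×ˢ Icc 0 t₀))
    (huxc : ContinuousOn (fun q : ℝ × ℝ => ux q.1 q.2) (univ ×ˢ Icc 0 t₀))
    (hPDE : ∀ q ∈ charTriangle dmin dmax x₀ t₀, ∀ p,
        ut q.1 q.2 p + D p * ux q.1 q.2 p = L (u q.1 q.2) p + f q.1 q.2 p)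
    (M' F' : ℝ)
    (hinit : ∀ x : ℝ, ∀ p, (x, (0:ℝ)) ∈ charTriangle dmin dmax x₀ t₀ →
      u x 0 p < M' * h p)
    (hfb : ∀ q ∈ charTriangle dmin dmax x₀ t₀, ∀ p, f q.1 q.2 p < F' * h p) :
    ∀ q ∈ charTriangle dmin dmax x₀ t₀, ∀ p,
      u q.1 q.2 p < (M' + F' * q.2) * h p := by
  by_contra hcon
  push_neg at hcon
  obtain ⟨qq, hqq, pp, hpp⟩ := hcon
  set Δ := charTriangle dmin dmax x₀ t₀ with hΔdef
  set slab := ((univ : Set ℝ) ×ˢ Icc (0:ℝ) t₀ : Set (ℝ × ℝ)) with hslabdef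
  have hΔslab : Δ ⊆ slab := fun q hq => ⟨mem_univ _, hq.1, hq.2.1⟩
  set W : (ℝ × ℝ) × (Icc p₁ p₂) → ℝ :=
    fun z => (M' + F' * z.1.2) * h z.2 - u z.1.1 z.1.2 z.2 with hWdef
  -- continuity of W on slab × univ
  have hueval : ContinuousOn (fun z : (ℝ × ℝ) × (Icc p₁ p₂) => u z.1.1 z.1.2 z.2)
      (slab ×ˢ univ) := by
    have h1 : ContinuousOn (fun z : (ℝ × ℝ) × (Icc p₁ p₂) =>
        ((u z.1.1 z.1.2 : C(Icc p₁ p₂, ℝ)), z.2)) (slab ×ˢ univ) :=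
      (hu.comp continuous_fst.continuousOn (fun z hz => hz.1)).prodMk
        continuous_snd.continuousOn
    exact ContinuousEval.continuous_eval.comp_continuousOn h1
  have hW : ContinuousOn W (slab ×ˢ univ) := by
    apply ContinuousOn.sub _ hueval
    exact Continuous.continuousOn (by fun_prop)
  -- the compact set of violations
  set A := (Δ ×ˢ (univ : Set (Icc p₁ p₂))) ∩ W ⁻¹' Iic 0 with hAdef
  have hAclosed : IsClosed A :=
    (hW.mono (prod_mono hΔslab (subset_refl _))).preimage_isClosed_of_isClosed
      ((isClosed_charTriangle dmin dmax x₀ t₀).prod isClosed_univ) isClosed_Iic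
  have hAcompact : IsCompact A :=
    IsCompact.of_isClosed_subset
      ((isCompact_charTriangle dmin dmax x₀ t₀).prod isCompact_univ)
      hAclosed inter_subset_left
  have hAne : A.Nonempty := by
    refine ⟨(qq, pp), ⟨⟨hqq, mem_univ _⟩, ?_⟩⟩
    simp only [W, mem_preimage, mem_Iic, sub_nonpos]
    exact hpp
  obtain ⟨z, hzA, hzmin⟩ := hAcompact.exists_isMinOn hAne
    (continuous_fst.snd.continuousOn)
  obtain ⟨⟨xs, ts⟩, ps⟩ := z
  obtain ⟨⟨hΔs, -⟩, hWs⟩ := hzA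
  have hWs : W ((xs, ts), ps) ≤ 0 := hWs
  have hts0 : 0 ≤ ts := hΔs.1
  have htst₀ : ts ≤ t₀ := hΔs.2.1
  have hminA : ∀ z' ∈ A, ts ≤ z'.1.2 := fun z' hz' => hzmin hz'
  -- the minimal time is positive
  have htspos : 0 < ts := by
    rcases lt_or_eq_of_le hts0 with hlt | heq
    · exact hlt
    · exfalso
      subst heq
      have h1 := hinit xs ps hΔs
      have h2 : (M' + F' * 0) * h ps ≤ u xs 0 ps := by
        simpa only [W, sub_nonpos] using hWs
      nlinarith [hh ps]
  -- strict positivity below the minimal time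
  have hpos_lt : ∀ X s : ℝ, ∀ p : Icc p₁ p₂, (X, s) ∈ Δ → s < ts →
      0 < W ((X, s), p) := by
    intro X s p hXs hslt
    by_contra hle
    push_neg at hle
    have hmem : ((X, s), p) ∈ A := ⟨⟨hXs, mem_univ _⟩, hle⟩
    have := hminA _ hmem
    simp only at this
    linarith
  -- nonnegativity at the minimal time
  have h0 : ∀ X : ℝ, ∀ p : Icc p₁ p₂, (X, ts) ∈ Δ → 0 ≤ W ((X, ts), p) := by
    intro X p hX
    by_contra hneg
    push_neg at hneg
    have hpath : ContinuousOn (fun s : ℝ => W ((X - D p * (ts - s), s), p))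
        (Icc 0 ts) := by
      apply hW.comp
      · exact Continuous.continuousOn (by fun_prop)
      · intro s hs
        exact ⟨⟨mem_univ _, hs.1, le_trans hs.2 htst₀⟩, mem_univ _⟩
    have hc : ContinuousWithinAt (fun s : ℝ => W ((X - D p * (ts - s), s), p))
        (Icc 0 ts) ts := hpath ts ⟨hts0, le_refl _⟩
    have hval : (fun s : ℝ => W ((X - D p * (ts - s), s), p)) ts = W ((X, ts), p) := by
      simp
    have hev : ∀ᶠ s in nhdsWithin ts (Icc 0 ts),
        W ((X - D p * (ts - s), s), p) < 0 := by
      apply hc (Iio_mem_nhds _)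
      rw [hval]; exact hneg
    have hev' : ∀ᶠ s in nhdsWithin ts (Ico 0 ts),
        W ((X - D p * (ts - s), s), p) < 0 :=
      hev.filter_mono (nhdsWithin_mono _ Ico_subset_Icc_self)
    have hNB : (nhdsWithin ts (Ico 0 ts)).NeBot := by
      apply mem_closure_iff_nhdsWithin_neBot.mp
      rw [closure_Ico (ne_of_lt htspos)]
      exact ⟨hts0, le_refl _⟩
    obtain ⟨s, hsW, hsI⟩ := (hev'.and eventually_mem_nhdsWithin).exists
    have hsΔ : (X - D p * (ts - s), s) ∈ Δ :=
      charMem hX (hdmin.2 ⟨p, rfl⟩) (hdmax.2 ⟨p, rfl⟩) hsI.1 (le_of_lt hsI.2)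
    have := hpos_lt _ s p hsΔ hsI.2
    linarith
  -- the extremal function v
  set v : C(Icc p₁ p₂, ℝ) := (M' + F' * ts) • h - u xs ts with hvdef
  have hveval : ∀ p, v p = W ((xs, ts), p) := by
    intro p
    simp [v, W, ContinuousMap.sub_apply, ContinuousMap.smul_apply, smul_eq_mul]
  have hv0 : ∀ p, 0 ≤ v p := fun p => by rw [hveval]; exact h0 xs p hΔs
  have hvps : v ps = 0 := le_antisymm (by rw [hveval]; exact hWs) (hv0 ps)
  -- positivity of L at the zero of v
  have hLv : 0 ≤ L v ps := by
    by_contra hneg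
    push_neg at hneg
    set c := K - L 1 ps with hcdef
    have key : ∀ δ : ℝ, 0 < δ → δ * c < L v ps := by
      intro δ hδ
      have hpos : ∀ p, 0 < (v + δ • (1 : C(Icc p₁ p₂, ℝ))) p := by
        intro p
        simp only [ContinuousMap.add_apply, ContinuousMap.smul_apply,
          ContinuousMap.one_apply, smul_eq_mul, mul_one]
        linarith [hv0 p]
      have h1 := hVII _ hpos ps
      simp only [map_add, map_smul, ContinuousMap.add_apply,
        ContinuousMap.smul_apply, ContinuousMap.one_apply, smul_eq_mul,
        mul_one, hvps, add_zero, zero_add] at h1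
      rw [hcdef]
      nlinarith
    have hδpos : 0 < -L v ps / (|c| + 1) := div_pos (by linarith) (by positivity)
    have h1 := key _ hδpos
    have h2 : -L v ps / (|c| + 1) * (|c| + 1) = -L v ps := by
      field_simp
    nlinarith [abs_nonneg c, neg_abs_le c,
      mul_le_mul_of_nonneg_left (neg_abs_le c) hδpos.le]
  have hLu : L (u xs ts) ps ≤ 0 := by
    have hLv' : L v = -(L (u xs ts)) := by
      rw [hvdef, map_sub, map_smul, hLh, smul_zero, zero_sub]
    rw [hLv'] at hLv
    simpa using hLv
  -- the strict gap G
  set c := D ps with hcps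
  set G := F' * h ps - ut xs ts ps - c * ux xs ts ps with hGdef
  have hG : 0 < G := by
    have hpde := hPDE (xs, ts) hΔs ps
    simp only at hpde
    have hfs := hfb (xs, ts) hΔs ps
    simp only at hfs
    rw [hGdef]
    linarith

  -- continuity of evaluated partial derivatives
  have hutE : ContinuousOn (fun q : ℝ × ℝ => ut q.1 q.2 ps) slab :=
    (continuous_eval_const ps).comp_continuousOn hutc
  have huxE : ContinuousOn (fun q : ℝ × ℝ => ux q.1 q.2 ps) slab :=
    (continuous_eval_const ps).comp_continuousOn huxc
  have hmemslab : ((xs, ts) : ℝ × ℝ) ∈ slab := hΔslab hΔs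
  have hcw1 := hutE _ hmemslab
  have hcw2 := huxE _ hmemslab
  rw [Metric.continuousWithinAt_iff] at hcw1 hcw2
  obtain ⟨δ₁, hδ₁, hball1⟩ := hcw1 (G/4) (by linarith)
  obtain ⟨δ₂, hδ₂, hball2⟩ := hcw2 (G/(4*(1+|c|))) (by positivity)
  set δ := min δ₁ δ₂ with hδdef
  have hδpos : 0 < δ := lt_min hδ₁ hδ₂
  have hδle1 : δ ≤ δ₁ := min_le_left _ _
  have hδle2 : δ ≤ δ₂ := min_le_right _ _
  set η := min ts (δ/(1+|c|)) with hηdef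
  have hηpos : 0 < η := lt_min htspos (by positivity)
  have hηts : η ≤ ts := min_le_left _ _
  have hηδ : η ≤ δ/(1+|c|) := min_le_right _ _
  have hηδ' : η * (1+|c|) ≤ δ := by
    have h2 := mul_le_mul_of_nonneg_right hηδ (by positivity : (0:ℝ) ≤ 1+|c|)
    rwa [div_mul_cancel₀ _ (by positivity : (1+|c|) ≠ 0)] at h2
  have hkey1 : |c| * (η/2) < δ := by nlinarith [abs_nonneg c, hηpos]
  have hkey2 : η/2 < δ := by nlinarith [abs_nonneg c, hηpos]
  set s := ts - η/2 with hsdef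
  have hts_s : ts - s = η/2 := by rw [hsdef]; ring
  have hs0 : 0 < s := by rw [hsdef]; linarith
  have hslt : s < ts := by rw [hsdef]; linarith
  have hst₀ : s ≤ t₀ := by linarith
  set xlo := xs - c * (ts - s) with hxlodef
  have hxloΔ : (xlo, s) ∈ Δ :=
    charMem hΔs (hdmin.2 ⟨ps, rfl⟩) (hdmax.2 ⟨ps, rfl⟩) hs0.le hslt.le
  have habs : |xlo - xs| ≤ |c| * (η/2) := by
    have h1 : xlo - xs = -(c * (ts - s)) := by rw [hxlodef]; ring
    rw [h1, abs_neg, abs_mul, hts_s, abs_of_nonneg (by positivity : (0:ℝ) ≤ η/2)]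
  -- mean value theorem in time
  have hderT : ∀ θ ∈ Ioo s ts, HasDerivAt (fun t => u xlo t ps) (ut xlo θ ps) θ := by
    intro θ hθ
    have h1 : θ ∈ Icc (0:ℝ) t₀ := ⟨by linarith [hθ.1], by linarith [hθ.2]⟩
    have h2 := (hut xlo θ h1).hasDerivAt
      (Icc_mem_nhds (by linarith [hθ.1]) (by linarith [hθ.2]))
    have h3 := ((ContinuousMap.evalCLM ℝ ps).hasFDerivAt
      (x := u xlo θ)).comp_hasDerivAt θ h2
    exact h3
  have hcontT : ContinuousOn (fun t => u xlo t ps) (Icc s ts) := by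
    have h1 : ContinuousOn (fun t => u xlo t ps) (Icc 0 t₀) := by
      have hline : Continuous fun t : ℝ => ((xlo, t) : ℝ × ℝ) := by fun_prop
      apply (continuous_eval_const ps).comp_continuousOn
      exact hu.comp hline.continuousOn (fun t ht => ⟨mem_univ _, ht⟩)
    exact h1.mono (Icc_subset_Icc hs0.le htst₀)
  obtain ⟨θ, hθI, hθsl⟩ := exists_hasDerivAt_eq_slope (fun t => u xlo t ps)
    (fun θ => ut xlo θ ps) hslt hcontT hderT
  rw [eq_div_iff (sub_ne_zero.2 hslt.ne')] at hθsl
  -- mean value theorem in space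
  have hderX : ∀ y : ℝ, HasDerivAt (fun y => u y ts ps) (ux y ts ps) y := by
    intro y
    have h2 := hux y ts ⟨hts0, htst₀⟩
    have h3 := ((ContinuousMap.evalCLM ℝ ps).hasFDerivAt
      (x := u y ts)).comp_hasDerivAt y h2
    exact h3
  obtain ⟨ξ, hξd, hXeq⟩ := mvtx (fun y => u y ts ps) (fun y => ux y ts ps)
    hderX xlo xs
  -- distance estimates
  have hθslab : ((xlo, θ) : ℝ × ℝ) ∈ slab :=
    ⟨mem_univ _, by constructor <;> [linarith [hθI.1]; linarith [hθI.2]]⟩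
  have hξslab : ((ξ, ts) : ℝ × ℝ) ∈ slab := ⟨mem_univ _, hts0, htst₀⟩
  have hd1 : dist ((xlo, θ) : ℝ × ℝ) ((xs, ts) : ℝ × ℝ) < δ₁ := by
    rw [Prod.dist_eq]
    apply max_lt
    · rw [Real.dist_eq]
      calc |xlo - xs| ≤ |c| * (η/2) := habs
        _ < δ := hkey1
        _ ≤ δ₁ := hδle1
    · rw [Real.dist_eq, abs_of_nonpos (by linarith [hθI.2] : θ - ts ≤ 0)]
      have h3 : ts - θ < η/2 := by
        have := hθI.1
        rw [hsdef] at this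
        linarith
      linarith
  have hd2 : dist ((ξ, ts) : ℝ × ℝ) ((xs, ts) : ℝ × ℝ) < δ₂ := by
    rw [Prod.dist_eq]
    apply max_lt
    · rw [Real.dist_eq]
      calc |ξ - xs| ≤ |xlo - xs| := hξd
        _ ≤ |c| * (η/2) := habs
        _ < δ := hkey1
        _ ≤ δ₂ := hδle2
    · rw [Real.dist_eq, sub_self, abs_zero]
      linarith
  have he1 := hball1 hθslab hd1
  have he2 := hball2 hξslab hd2
  rw [Real.dist_eq] at he1 he2
  -- assembling the contradiction
  have hcbound : c * (ux ξ ts ps - ux xs ts ps) ≤ G/4 := by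
    have hd : G/(4*(1+|c|)) * (4*(1+|c|)) = G :=
      div_mul_cancel₀ _ (by positivity)
    calc c * (ux ξ ts ps - ux xs ts ps)
        ≤ |c * (ux ξ ts ps - ux xs ts ps)| := le_abs_self _
      _ = |c| * |ux ξ ts ps - ux xs ts ps| := abs_mul _ _
      _ ≤ |c| * (G/(4*(1+|c|))) := mul_le_mul_of_nonneg_left he2.le (abs_nonneg c)
      _ ≤ G/4 := by
          nlinarith [abs_nonneg c,
            div_nonneg hG.le (by positivity : (0:ℝ) ≤ 4*(1+|c|))]
  have hsum : ut xlo θ ps + c * ux ξ ts ps ≤ F' * h ps - G/2 := by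
    have hGexp : ut xs ts ps + c * ux xs ts ps = F' * h ps - G := by
      rw [hGdef]; ring
    have h1 : ut xlo θ ps - ut xs ts ps < G/4 := lt_of_abs_lt he1
    have hring : c * (ux ξ ts ps - ux xs ts ps)
        = c * ux ξ ts ps - c * ux xs ts ps := by ring
    linarith [hcbound]
  have hcomb : u xs ts ps - u xlo s ps
      = (ut xlo θ ps + c * ux ξ ts ps) * (ts - s) := by
    have h1 : xs - xlo = c * (ts - s) := by rw [hxlodef]; ring
    rw [h1] at hXeq
    linear_combination hXeq - hθsl
  have hA1 : 0 < W ((xlo, s), ps) := hpos_lt xlo s ps hxloΔ hslt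
  have hA1' : u xlo s ps < (M' + F' * s) * h ps := by
    simpa only [W, sub_pos] using hA1
  have hA2 : (M' + F' * ts) * h ps ≤ u xs ts ps := by
    simpa only [W, sub_nonpos] using hWs
  have hmul : (ut xlo θ ps + c * ux ξ ts ps) * (ts - s)
      ≤ (F' * h ps - G/2) * (ts - s) :=
    mul_le_mul_of_nonneg_right hsum (by linarith)
  nlinarith [mul_pos hG (sub_pos.2 hslt), hh ps, hA1', hA2, hcomb, hmul]



set_option maxHeartbeats 1000000 in
/-- **Lemma 4 (a priori estimate).**  Let `L` satisfy Conditions VII and VIII.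
Then there is a constant `C > 0`, independent of the point `(x₀, t₀)`, such
that every continuously differentiable solution `u` of
`uₜ + D(p) uₓ = L u + f` on the characteristic triangle `Δ₀` of `(x₀, t₀)`
with initial data `u⁰` satisfies
`‖u‖_Δ ≤ C (‖u⁰‖_Γ + t₀ ‖f‖_Δ)` in the uniform norm. -/
theorem lemma4_apriori_estimate (p₁ p₂ : ℝ) (hp : p₁ < p₂)
    (L : C(Icc p₁ p₂, ℝ) →L[ℝ] C(Icc p₁ p₂, ℝ))
    (K : ℝ)
    (hVII : ∀ u : C(Icc p₁ p₂, ℝ), (∀ p, 0 < u p) → ∀ p, 0 < L u p - K * u p)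
    (h : C(Icc p₁ p₂, ℝ)) (hLh : L h = 0) (hh : ∀ p, 0 < h p)
    (D : C(Icc p₁ p₂, ℝ)) (dmin dmax : ℝ)
    (hdmin : IsLeast (range fun p => D p) dmin)
    (hdmax : IsGreatest (range fun p => D p) dmax) :
    ∃ C : ℝ, 0 < C ∧
      ∀ (x₀ t₀ : ℝ), 0 < t₀ →
      ∀ (u ut ux : ℝ → ℝ → C(Icc p₁ p₂, ℝ))
        (u0 : ℝ → Icc p₁ p₂ → ℝ)
        (f : ℝ → ℝ → Icc p₁ p₂ → ℝ),
      -- `u` is continuously differentiable in `(x, t)` on `ℝ × [0, t₀]`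
      ContinuousOn (fun q : ℝ × ℝ => u q.1 q.2) (univ ×ˢ Icc 0 t₀) →
      (∀ x : ℝ, ∀ t ∈ Icc (0:ℝ) t₀,
        HasDerivWithinAt (fun s => u x s) (ut x t) (Icc 0 t₀) t) →
      (∀ x : ℝ, ∀ t ∈ Icc (0:ℝ) t₀, HasDerivAt (fun y => u y t) (ux x t) x) →
      ContinuousOn (fun q : ℝ × ℝ => ut q.1 q.2) (univ ×ˢ Icc 0 t₀) →
      ContinuousOn (fun q : ℝ × ℝ => ux q.1 q.2) (univ ×ˢ Icc 0 t₀) →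
      -- `f` is continuous
      ContinuousOn (fun q : ℝ × ℝ × Icc p₁ p₂ => f q.1 q.2.1 q.2.2)
        (univ ×ˢ Icc 0 t₀ ×ˢ univ) →
      -- the transport equation holds on `Δ₀`
      (∀ q ∈ charTriangle dmin dmax x₀ t₀, ∀ p,
        ut q.1 q.2 p + D p * ux q.1 q.2 p = L (u q.1 q.2) p + f q.1 q.2 p) →
      -- initial condition
      (∀ x : ℝ, ∀ p, u x 0 p = u0 x p) →
      -- the a priori sup-norm estimate `‖u‖_Δ ≤ C (‖u⁰‖_Γ + t₀ ‖f‖_Δ)`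
      ∀ q ∈ charTriangle dmin dmax x₀ t₀, ∀ p,
        |u q.1 q.2 p| ≤
          C * (sSup ((fun r : ℝ × Icc p₁ p₂ => |u0 r.1 r.2|) ''
                  (charBase dmin dmax x₀ t₀ ×ˢ univ)) +
               t₀ * sSup ((fun r : (ℝ × ℝ) × Icc p₁ p₂ => |f r.1.1 r.1.2 r.2|) ''
                  (charTriangle dmin dmax x₀ t₀ ×ˢ univ))) := by
  have hPne : (univ : Set (Icc p₁ p₂)).Nonempty :=
    ⟨⟨p₁, le_refl _, hp.le⟩, mem_univ _⟩
  obtain ⟨pm, -, hpm⟩ := isCompact_univ.exists_isMinOn hPne h.continuous.continuousOn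
  obtain ⟨pM, -, hpM⟩ := isCompact_univ.exists_isMaxOn hPne h.continuous.continuousOn
  have hpm' : ∀ p, h pm ≤ h p := fun p => hpm (mem_univ p)
  have hpM' : ∀ p, h p ≤ h pM := fun p => hpM (mem_univ p)
  have hm0 : 0 < h pm := hh pm
  have hM0' : 0 < h pM := hh pM
  refine ⟨h pM / h pm, div_pos hM0' hm0, ?_⟩
  intro x₀ t₀ ht₀ u ut ux u0 f hu hut hux hutc huxc hfc hPDE hinit0 q hq p
  have hdd : dmin ≤ dmax := hdmax.2 hdmin.1
  set M := sSup ((fun r : ℝ × Icc p₁ p₂ => |u0 r.1 r.2|) ''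
    (charBase dmin dmax x₀ t₀ ×ˢ univ)) with hMdef
  set F := sSup ((fun r : (ℝ × ℝ) × Icc p₁ p₂ => |f r.1.1 r.1.2 r.2|) ''
    (charTriangle dmin dmax x₀ t₀ ×ˢ univ)) with hFdef
  -- bounds for M
  have hcontU0 : ContinuousOn (fun r : ℝ × Icc p₁ p₂ => |u0 r.1 r.2|)
      (charBase dmin dmax x₀ t₀ ×ˢ univ) := by
    have h2 : ContinuousOn (fun r : ℝ × Icc p₁ p₂ =>
        ((u r.1 0 : C(Icc p₁ p₂, ℝ)), r.2)) (charBase dmin dmax x₀ t₀ ×ˢ univ) := by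
      refine ContinuousOn.prodMk ?_ continuous_snd.continuousOn
      have hline : Continuous fun r : ℝ × Icc p₁ p₂ => ((r.1, (0:ℝ)) : ℝ × ℝ) := by
        fun_prop
      exact hu.comp hline.continuousOn (fun r _ => ⟨mem_univ _, le_refl _, ht₀.le⟩)
    have h1 : ContinuousOn (fun r : ℝ × Icc p₁ p₂ => u r.1 0 r.2)
        (charBase dmin dmax x₀ t₀ ×ˢ univ) :=
      ContinuousEval.continuous_eval.comp_continuousOn h2
    exact (h1.abs).congr (fun r _ => by simp only [hinit0 r.1 r.2])
  have hbasecompact : IsCompact (charBase dmin dmax x₀ t₀ ×ˢ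
      (univ : Set (Icc p₁ p₂))) := isCompact_Icc.prod isCompact_univ
  have hMbdd : BddAbove ((fun r : ℝ × Icc p₁ p₂ => |u0 r.1 r.2|) ''
      (charBase dmin dmax x₀ t₀ ×ˢ univ)) := hbasecompact.bddAbove_image hcontU0
  have hMb : ∀ x ∈ charBase dmin dmax x₀ t₀, ∀ p' : Icc p₁ p₂, |u0 x p'| ≤ M :=
    fun x hx p' => le_csSup hMbdd ⟨(x, p'), ⟨hx, mem_univ _⟩, rfl⟩
  have hbase_ne : (x₀ - dmax * t₀) ∈ charBase dmin dmax x₀ t₀ :=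
    ⟨le_refl _, by nlinarith⟩
  have hM0 : 0 ≤ M :=
    le_trans (abs_nonneg _) (hMb _ hbase_ne ⟨p₁, le_refl _, hp.le⟩)
  -- bounds for F
  have hcontF : ContinuousOn (fun r : (ℝ × ℝ) × Icc p₁ p₂ => |f r.1.1 r.1.2 r.2|)
      (charTriangle dmin dmax x₀ t₀ ×ˢ univ) := by
    have hmap : Continuous fun r : (ℝ × ℝ) × Icc p₁ p₂ =>
        ((r.1.1, r.1.2, r.2) : ℝ × ℝ × Icc p₁ p₂) := by fun_prop
    have h1 : ContinuousOn (fun r : (ℝ × ℝ) × Icc p₁ p₂ => f r.1.1 r.1.2 r.2)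
        (charTriangle dmin dmax x₀ t₀ ×ˢ univ) :=
      hfc.comp hmap.continuousOn
        (fun r hr => ⟨mem_univ _, ⟨hr.1.1, hr.1.2.1⟩, mem_univ _⟩)
    exact h1.abs
  have hFbdd : BddAbove ((fun r : (ℝ × ℝ) × Icc p₁ p₂ => |f r.1.1 r.1.2 r.2|) ''
      (charTriangle dmin dmax x₀ t₀ ×ˢ univ)) :=
    ((isCompact_charTriangle dmin dmax x₀ t₀).prod isCompact_univ).bddAbove_image hcontF
  have hFb : ∀ q' ∈ charTriangle dmin dmax x₀ t₀, ∀ p' : Icc p₁ p₂,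
      |f q'.1 q'.2 p'| ≤ F :=
    fun q' hq' p' => le_csSup hFbdd ⟨(q', p'), ⟨hq', mem_univ _⟩, rfl⟩
  have hΔne : ((x₀, t₀) : ℝ × ℝ) ∈ charTriangle dmin dmax x₀ t₀ :=
    ⟨ht₀.le, le_refl _, by simp, by simp⟩
  have hF0 : 0 ≤ F :=
    le_trans (abs_nonneg _) (hFb _ hΔne ⟨p₁, le_refl _, hp.le⟩)
  -- the ε-estimate
  have Hε : ∀ ε : ℝ, 0 < ε → |u q.1 q.2 p| ≤ h pM / h pm * (M + t₀ * F) + ε := by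
    intro ε hε
    set ε₀ := ε * h pm / (h pM * (1 + t₀)) with hε₀def
    have hε₀pos : 0 < ε₀ := div_pos (by positivity) (by positivity)
    set M' := (M + ε₀) / h pm with hM'def
    set F' := (F + ε₀) / h pm with hF'def
    have hMε : 0 < M + ε₀ := by linarith
    have hFε : 0 < F + ε₀ := by linarith
    have hM'0 : 0 ≤ M' := (div_pos hMε hm0).le
    have hF'0 : 0 ≤ F' := (div_pos hFε hm0).le
    have hM'h : ∀ p' : Icc p₁ p₂, M + ε₀ ≤ M' * h p' := by
      intro p'
      rw [hM'def, div_mul_eq_mul_div, le_div_iff₀ hm0]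
      exact mul_le_mul_of_nonneg_left (hpm' p') hMε.le
    have hF'h : ∀ p' : Icc p₁ p₂, F + ε₀ ≤ F' * h p' := by
      intro p'
      rw [hF'def, div_mul_eq_mul_div, le_div_iff₀ hm0]
      exact mul_le_mul_of_nonneg_left (hpm' p') hFε.le
    have hinit' : ∀ x : ℝ, ∀ p' : Icc p₁ p₂,
        (x, (0:ℝ)) ∈ charTriangle dmin dmax x₀ t₀ → u x 0 p' < M' * h p' := by
      intro x p' hx
      have h3 := hx.2.2.1
      have h4 := hx.2.2.2
      simp only at h3 h4
      have hxbase : x ∈ charBase dmin dmax x₀ t₀ :=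
        ⟨by linarith, by linarith⟩
      have h5 : u x 0 p' ≤ |u0 x p'| := by
        rw [hinit0]; exact le_abs_self _
      linarith [hM'h p', hMb x hxbase p']
    have hfb' : ∀ q' ∈ charTriangle dmin dmax x₀ t₀, ∀ p' : Icc p₁ p₂,
        f q'.1 q'.2 p' < F' * h p' := by
      intro q' hq' p'
      linarith [hFb q' hq' p', le_abs_self (f q'.1 q'.2 p'), hF'h p']
    have hcore1 := core p₁ p₂ hp L K hVII h hLh hh D dmin dmax hdmin hdmax
      x₀ t₀ ht₀ u ut ux f hu hut hux hutc huxc hPDE M' F' hinit' hfb' q hq p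
    have hcore2 := core p₁ p₂ hp L K hVII h hLh hh D dmin dmax hdmin hdmax
      x₀ t₀ ht₀ (fun x t => -u x t) (fun x t => -ut x t) (fun x t => -ux x t)
      (fun x t p' => -f x t p') hu.neg
      (fun x t ht => (hut x t ht).neg) (fun x t ht => (hux x t ht).neg)
      hutc.neg huxc.neg
      (by
        intro q' hq' p'
        have := hPDE q' hq' p'
        simp only [ContinuousMap.neg_apply, map_neg]
        linarith)
      M' F'
      (by
        intro x p' hx
        have h3 := hx.2.2.1
        have h4 := hx.2.2.2
        simp only at h3 h4
        have hxbase : x ∈ charBase dmin dmax x₀ t₀ :=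
          ⟨by linarith, by linarith⟩
        have h5 : (-(u x 0)) p' ≤ |u0 x p'| := by
          simp only [ContinuousMap.neg_apply]
          rw [hinit0]
          exact neg_le_abs _
        simp only [ContinuousMap.neg_apply] at h5 ⊢
        linarith [hM'h p', hMb x hxbase p'])
      (by
        intro q' hq' p'
        show -f q'.1 q'.2 p' < F' * h p'
        linarith [hFb q' hq' p', neg_abs_le (f q'.1 q'.2 p'), hF'h p'])
      q hq p
    simp only [ContinuousMap.neg_apply] at hcore2
    have habs : |u q.1 q.2 p| < (M' + F' * q.2) * h p :=
      abs_lt.mpr ⟨by linarith, hcore1⟩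
    have hq2 : 0 ≤ q.2 := hq.1
    have hq2' : q.2 ≤ t₀ := hq.2.1
    have hB1 : M' + F' * q.2 ≤ M' + F' * t₀ := by
      have := mul_le_mul_of_nonneg_left hq2' hF'0
      linarith
    have hB2 : (M' + F' * q.2) * h p ≤ (M' + F' * t₀) * h pM := by
      apply mul_le_mul hB1 (hpM' p) (hh p).le
      have : 0 ≤ F' * t₀ := by positivity
      linarith
    have hfinal : (M' + F' * t₀) * h pM = h pM / h pm * (M + t₀ * F) + ε := by
      rw [hM'def, hF'def, hε₀def]
      field_simp
      ring
    linarith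
  by_contra hcon
  push_neg at hcon
  have := Hε ((|u q.1 q.2 p| - h pM / h pm * (M + t₀ * F)) / 2) (by linarith)
  linarith
end
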